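/- Let n ≥ 2, let m be an odd positive divisor of n, let ω_m = e^{2πi/m}, let G_{n,m} = SU(n)/⟨ω_m I⟩, and let τ be the automorphism of G_{n,m} induced by entrywise complex conjugation on SU(n). Then the fixed-point subgroup (G_{n,m})^τ equals the image, under the quotient map SU(n) → G_{n,m}, of the subgroup SO(n) = {A ∈ SU(n) : every entry of A is real} of real special orthogonal matrices; in particular (G_{n,m})^τ is isomorphic to SO(n). -/

import Mathlib

open Matrix in
/-- The special unitary group `SU(n, α)`, as a subgroup of the unitary group
`Matrix.unitaryGroup (Fin n) α`: the unitary matrices of determinant `1`. -/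
def SpecialUnitary (n : ℕ) (α : Type*) [CommRing α] [StarRing α] :
    Subgroup (Matrix.unitaryGroup (Fin n) α) where
  carrier := {A | (A : Matrix (Fin n) (Fin n) α).det = 1}
  one_mem' := by simp
  mul_mem' := by
    intro a b ha hb
    simp only [Set.mem_setOf_eq] at *
    rw [Matrix.UnitaryGroup.mul_val, Matrix.det_mul, ha, hb, one_mul]
  inv_mem' := by
    intro a ha
    simp only [Set.mem_setOf_eq] at *
    rw [Matrix.UnitaryGroup.inv_val, Matrix.star_eq_conjTranspose, Matrix.det_conjTranspose, ha,
      star_one]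

/-- The fixed-point subgroup `G^θ` of an automorphism `θ` of `G`. -/
def fixedSubgroup {G : Type*} [Group G] (θ : G ≃* G) : Subgroup G where
  carrier := {g | θ g = g}
  one_mem' := map_one θ
  mul_mem' := by
    intro a b ha hb
    simp only [Set.mem_setOf_eq] at *
    rw [map_mul, ha, hb]
  inv_mem' := by
    intro a ha
    simp only [Set.mem_setOf_eq] at *
    rw [map_inv, ha]

/-- for `2 ≤ n`, `m` an odd divisor of `n`, `G_{n,m} = SU(n)/⟨ω_m I⟩` and `τ`
the automorphism induced by entrywise complex conjugation, the fixed-point subgroup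
`(G_{n,m})^τ` is the image under the quotient map of the subgroup
`SO(n) = {A ∈ SU(n) : all entries of A real}`; in particular it is isomorphic to `SO(n)`. -/
theorem stmt_12 (n m : ℕ) (hn : 2 ≤ n) (hm : 0 < m) (hdvd : m ∣ n) (hodd : Odd m)
    (z : ↥(SpecialUnitary n ℂ))
    (hz : z.val.val =
      Complex.exp (2 * (Real.pi : ℂ) * Complex.I / (m : ℂ)) • (1 : Matrix (Fin n) (Fin n) ℂ))
    (Z : Subgroup ↥(SpecialUnitary n ℂ)) (hZ : Z = Subgroup.zpowers z) [Z.Normal]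
    (σ : ↥(SpecialUnitary n ℂ) ≃* ↥(SpecialUnitary n ℂ))
    (hσ : ∀ A : ↥(SpecialUnitary n ℂ), (σ A).val.val = (A.val.val).map (starRingEnd ℂ))
    (τ : (↥(SpecialUnitary n ℂ) ⧸ Z) ≃* (↥(SpecialUnitary n ℂ) ⧸ Z))
    (hτ : ∀ A : ↥(SpecialUnitary n ℂ), τ (QuotientGroup.mk A) = QuotientGroup.mk (σ A))
    (hτc : Continuous τ) :
    -- `(G_{n,m})^τ` is the image of `SO(n) ⊆ SU(n)` under the quotient map
    ({x : ↥(SpecialUnitary n ℂ) ⧸ Z | τ x = x} =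
        (QuotientGroup.mk : ↥(SpecialUnitary n ℂ) → ↥(SpecialUnitary n ℂ) ⧸ Z) ''
          {A : ↥(SpecialUnitary n ℂ) | ∀ i j, (A.val.val i j).im = 0}) ∧
      -- in particular, `(G_{n,m})^τ ≅ SO(n)` (`SO(n)` realized as `SU(n, ℝ)`)
      Nonempty (↥(fixedSubgroup τ) ≃* ↥(SpecialUnitary n ℝ)) := by
  classical
  set ω : ℂ := Complex.exp (2 * (Real.pi : ℂ) * Complex.I / (m : ℂ)) with hωdef
  have hm0 : (m : ℂ) ≠ 0 := Nat.cast_ne_zero.2 hm.ne'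
  have hωne : ω ≠ 0 := Complex.exp_ne_zero _
  have hωm : ω ^ m = 1 := by
    rw [hωdef, ← Complex.exp_nat_mul,
      show (m : ℂ) * (2 * (Real.pi : ℂ) * Complex.I / (m : ℂ)) = 2 * Real.pi * Complex.I from by
        field_simp]
    exact Complex.exp_two_pi_mul_I
  have hconj : (starRingEnd ℂ) ω = ω⁻¹ := by
    rw [hωdef, ← Complex.exp_conj, ← Complex.exp_neg]
    congr 1
    simp only [map_div₀, map_mul, Complex.conj_I, map_ofNat, Complex.conj_ofReal, map_natCast]
    ring
  -- value of integer powers of z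
  have hnat : ∀ k : ℕ,
      ((z ^ k : ↥(SpecialUnitary n ℂ)).val.val) = ω ^ k • (1 : Matrix (Fin n) (Fin n) ℂ) := by
    intro k
    induction k with
    | zero => simp
    | succ k ih =>
      rw [pow_succ]
      show ((z ^ k).val.val) * (z.val.val) = _
      rw [ih, hz, smul_mul_smul_comm, one_mul, pow_succ]
  have hzpow : ∀ k : ℤ,
      ((z ^ k : ↥(SpecialUnitary n ℂ)).val.val) = ω ^ k • (1 : Matrix (Fin n) (Fin n) ℂ) := by
    intro k
    cases k with
    | ofNat k => rw [Int.ofNat_eq_coe, zpow_natCast, hnat, zpow_natCast]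
    | negSucc k =>
      rw [zpow_negSucc]
      show star ((z ^ (k + 1) : ↥(SpecialUnitary n ℂ)).val.val) = _
      rw [hnat, star_smul, star_one, zpow_negSucc, ← inv_pow]
      congr 1
      rw [Complex.star_def, map_pow, hconj]
  -- real matrices are fixed by σ
  have hσfix : ∀ A : ↥(SpecialUnitary n ℂ), (∀ i j, (A.val.val i j).im = 0) → σ A = A := by
    intro A h
    apply Subtype.ext
    apply Subtype.ext
    rw [hσ]
    ext i j
    simp only [Matrix.map_apply]
    exact Complex.conj_eq_iff_im.2 (h i j)
  have hrealτ : ∀ A : ↥(SpecialUnitary n ℂ), (∀ i j, (A.val.val i j).im = 0) →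
      τ (QuotientGroup.mk A) = QuotientGroup.mk A := by
    intro A h
    rw [hτ, hσfix A h]
  -- every fixed point has a real representative
  obtain ⟨l, hl⟩ := hodd
  have hfix : ∀ x : ↥(SpecialUnitary n ℂ) ⧸ Z, τ x = x →
      ∃ A : ↥(SpecialUnitary n ℂ), (∀ i j, (A.val.val i j).im = 0) ∧
        (QuotientGroup.mk A : ↥(SpecialUnitary n ℂ) ⧸ Z) = x := by
    intro x hx
    obtain ⟨A, rfl⟩ := QuotientGroup.mk_surjective x
    rw [hτ, QuotientGroup.eq, hZ] at hx
    obtain ⟨k, hk⟩ := Subgroup.mem_zpowers_iff.1 hx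
    have hσA : σ A = A * (z ^ k)⁻¹ := by
      rw [eq_mul_inv_iff_mul_eq, hk, mul_inv_cancel_left]
    have hA : (A.val.val).map (starRingEnd ℂ) = ω ^ (-k) • A.val.val := by
      rw [← hσ, hσA]
      show (A.val.val) * (((z ^ k)⁻¹ : ↥(SpecialUnitary n ℂ)).val.val) = _
      rw [← zpow_neg, hzpow, Matrix.mul_smul, Matrix.mul_one]
    have hAentry : ∀ i j, (starRingEnd ℂ) (A.val.val i j) = ω ^ (-k) * A.val.val i j := by
      intro i j
      have := congrFun (congrFun hA i) j
      simpa [Matrix.map_apply, Matrix.smul_apply, smul_eq_mul] using this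
    set t : ℤ := (-k) * (l + 1) with ht
    refine ⟨A * z ^ t, ?_, ?_⟩
    · intro i j
      have hBv : ((A * z ^ t).val.val) i j = ω ^ t * A.val.val i j := by
        have : ((A * z ^ t).val.val) = A.val.val * ((z ^ t : ↥(SpecialUnitary n ℂ)).val.val) :=
          rfl
        rw [this, hzpow, Matrix.mul_smul, Matrix.mul_one, Matrix.smul_apply, smul_eq_mul]
      have hm1 : ω ^ ((m : ℤ) * k) = 1 := by
        rw [zpow_mul, zpow_natCast, hωm, one_zpow]
      have hpow : ω ^ (-t) * ω ^ (-k) = ω ^ t := by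
        rw [← zpow_add₀ hωne]
        have h1 : -t + -k = t + (m : ℤ) * k := by
          rw [ht, hl]
          push_cast
          ring
        rw [h1, zpow_add₀ hωne, hm1, mul_one]
      have : (starRingEnd ℂ) (((A * z ^ t).val.val) i j) = ((A * z ^ t).val.val) i j := by
        rw [hBv, map_mul, map_zpow₀, hconj, inv_zpow, ← zpow_neg, hAentry, ← mul_assoc, hpow,
          ← hBv]
      exact Complex.conj_eq_iff_im.1 this
    · rw [QuotientGroup.eq, hZ]
      have : (A * z ^ t)⁻¹ * A = z ^ (-t) := by group
      rw [this]
      exact Subgroup.mem_zpowers_iff.2 ⟨-t, rfl⟩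
  -- the map from real special unitary matrices to complex ones
  have hmapstar : ∀ R : Matrix (Fin n) (Fin n) ℝ,
      star (R.map (⇑Complex.ofRealHom)) = (star R).map (⇑Complex.ofRealHom) := by
    intro R
    rw [Matrix.star_eq_conjTranspose, Matrix.star_eq_conjTranspose]
    exact (Matrix.conjTranspose_map (⇑Complex.ofRealHom)
      (fun x => by simp [Complex.conj_ofReal])).symm
  have hmapU : ∀ R : ↥(SpecialUnitary n ℝ),
      (R.val.val.map (⇑Complex.ofRealHom)) ∈ Matrix.unitaryGroup (Fin n) ℂ := by
    intro R
    rw [Matrix.mem_unitaryGroup_iff, hmapstar, ← Matrix.map_mul,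
      Matrix.mem_unitaryGroup_iff.1 R.val.2, Matrix.map_one _ (map_zero _) (map_one _)]
  have hmapdet : ∀ R : ↥(SpecialUnitary n ℝ),
      ((R.val.val.map (⇑Complex.ofRealHom)) : Matrix (Fin n) (Fin n) ℂ).det = 1 := by
    intro R
    have : (R.val.val.map (⇑Complex.ofRealHom)).det = Complex.ofRealHom R.val.val.det := by
      rw [RingHom.map_det]
      rfl
    rw [this, R.2, map_one]
  obtain ⟨toSU, htoSUval⟩ : ∃ f : ↥(SpecialUnitary n ℝ) → ↥(SpecialUnitary n ℂ),
      ∀ R : ↥(SpecialUnitary n ℝ), (f R).val.val = R.val.val.map (⇑Complex.ofRealHom) :=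
    ⟨fun R => ⟨⟨R.val.val.map (⇑Complex.ofRealHom), hmapU R⟩, hmapdet R⟩, fun R => rfl⟩
  have htoSUreal : ∀ (R : ↥(SpecialUnitary n ℝ)) i j, (((toSU R).val.val) i j).im = 0 := by
    intro R i j
    rw [htoSUval]
    simp [Matrix.map_apply]
  have hmapinj : Function.Injective
      (fun M : Matrix (Fin n) (Fin n) ℝ => M.map (⇑Complex.ofRealHom)) := by
    intro M N h
    ext i j
    have := congrFun (congrFun h i) j
    exact Complex.ofReal_injective this
  -- the monoid hom φ : SU(n,ℝ) → fixedSubgroup τ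
  have hφmem : ∀ R : ↥(SpecialUnitary n ℝ),
      (QuotientGroup.mk (toSU R) : ↥(SpecialUnitary n ℂ) ⧸ Z) ∈ fixedSubgroup τ :=
    fun R => hrealτ (toSU R) (htoSUreal R)
  obtain ⟨φ, hφval⟩ : ∃ φ : ↥(SpecialUnitary n ℝ) →* ↥(fixedSubgroup τ),
      ∀ R : ↥(SpecialUnitary n ℝ),
        (φ R).val = (QuotientGroup.mk (toSU R) : ↥(SpecialUnitary n ℂ) ⧸ Z) := by
    refine ⟨{ toFun := fun R => ⟨QuotientGroup.mk (toSU R), hφmem R⟩, map_one' := ?_, map_mul' := ?_ }, fun R => rfl⟩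
    · -- map_one'
      apply Subtype.ext
      show (QuotientGroup.mk (toSU 1) : ↥(SpecialUnitary n ℂ) ⧸ Z) = 1
      have : toSU 1 = 1 := by
        apply Subtype.ext; apply Subtype.ext
        rw [htoSUval]
        show ((1 : Matrix (Fin n) (Fin n) ℝ)).map (⇑Complex.ofRealHom) = 1
        exact Matrix.map_one _ (map_zero _) (map_one _)
      rw [this]
      rfl
    · -- map_mul'
      intro R S
      apply Subtype.ext
      show (QuotientGroup.mk (toSU (R * S)) : ↥(SpecialUnitary n ℂ) ⧸ Z) = _
      have : toSU (R * S) = toSU R * toSU S := by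
        apply Subtype.ext; apply Subtype.ext
        show (toSU (R * S)).val.val = (toSU R).val.val * (toSU S).val.val
        rw [htoSUval, htoSUval, htoSUval,
          show ((R * S).val.val : Matrix (Fin n) (Fin n) ℝ) = R.val.val * S.val.val from rfl,
          Matrix.map_mul]
      rw [this]
      rfl
  have hinj : Function.Injective φ := by
    rw [injective_iff_map_eq_one]
    intro R hR
    have h1 : (QuotientGroup.mk (toSU R) : ↥(SpecialUnitary n ℂ) ⧸ Z) = 1 := by
      have h0 := congrArg Subtype.val hR
      rw [hφval] at h0
      simpa using h0
    rw [QuotientGroup.eq_one_iff, hZ] at h1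
    obtain ⟨k, hk⟩ := Subgroup.mem_zpowers_iff.1 h1
    have hval : ω ^ k • (1 : Matrix (Fin n) (Fin n) ℂ) = R.val.val.map (⇑Complex.ofRealHom) := by
      rw [← hzpow, hk, htoSUval]
    obtain ⟨i0⟩ : Nonempty (Fin n) := ⟨⟨0, by omega⟩⟩
    have hent : ω ^ k = Complex.ofRealHom (R.val.val i0 i0) := by
      have := congrFun (congrFun hval i0) i0
      simpa [Matrix.smul_apply, Matrix.one_apply, Matrix.map_apply] using this
    have him : (ω ^ k).im = 0 := by rw [hent]; simp
    have hre : ω ^ k = ((ω ^ k).re : ℂ) :=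
      (Complex.conj_eq_iff_re.1 (Complex.conj_eq_iff_im.2 him)).symm
    have hrm : ((ω ^ k).re : ℝ) ^ m = 1 := by
      have h2 : (ω ^ k) ^ m = 1 := by
        rw [← zpow_natCast (ω ^ k) m, ← zpow_mul, mul_comm, zpow_mul, zpow_natCast, hωm, one_zpow]
      have h3 : (((ω ^ k).re : ℂ)) ^ m = 1 := by rw [← hre]; exact h2
      exact_mod_cast h3
    have hone : ((ω ^ k).re : ℝ) = 1 :=
      (Odd.strictMono_pow ⟨l, hl⟩).injective (by simpa using hrm)
    have hωk1 : ω ^ k = 1 := by rw [hre, hone, Complex.ofReal_one]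
    have : R.val.val.map (⇑Complex.ofRealHom) =
        ((1 : Matrix (Fin n) (Fin n) ℝ)).map (⇑Complex.ofRealHom) := by
      rw [← hval, hωk1, one_smul, Matrix.map_one _ (map_zero _) (map_one _)]
    have hR1 : R.val.val = 1 := hmapinj this
    apply Subtype.ext; apply Subtype.ext
    exact hR1
  have hsurj : Function.Surjective φ := by
    intro x
    obtain ⟨A, hreal, hmk⟩ := hfix x.val x.2
    obtain ⟨R, hRdef⟩ : ∃ R : Matrix (Fin n) (Fin n) ℝ,
        R = fun i j => (A.val.val i j).re := ⟨_, rfl⟩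
    have hmap : R.map (⇑Complex.ofRealHom) = A.val.val := by
      ext i j
      apply Complex.ext
      · rw [Matrix.map_apply]; simp [hRdef]
      · rw [Matrix.map_apply]; simp [hRdef, hreal i j]
    have hmemU : R ∈ Matrix.unitaryGroup (Fin n) ℝ := by
      rw [Matrix.mem_unitaryGroup_iff]
      apply hmapinj
      show (R * star R).map (⇑Complex.ofRealHom) = _
      rw [Matrix.map_mul, ← hmapstar, hmap, Matrix.mem_unitaryGroup_iff.1 A.val.2]
      exact (Matrix.map_one _ (map_zero _) (map_one _)).symm
    have hdet : ((⟨R, hmemU⟩ : Matrix.unitaryGroup (Fin n) ℝ) :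
        Matrix (Fin n) (Fin n) ℝ).det = 1 := by
      have h1 : Complex.ofRealHom R.det = Complex.ofRealHom (1 : ℝ) := by
        have : (R.map (⇑Complex.ofRealHom)).det = Complex.ofRealHom R.det := by
          rw [RingHom.map_det]; rfl
        rw [map_one, ← this, hmap]
        exact A.2
      exact Complex.ofReal_injective h1
    refine ⟨⟨⟨R, hmemU⟩, hdet⟩, ?_⟩
    apply Subtype.ext
    rw [hφval]
    have : toSU ⟨⟨R, hmemU⟩, hdet⟩ = A := by
      apply Subtype.ext; apply Subtype.ext
      rw [htoSUval]
      exact hmap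
    rw [this, hmk]
  refine ⟨?_, ⟨(MulEquiv.ofBijective φ ⟨hinj, hsurj⟩).symm⟩⟩
  ext x
  constructor
  · intro hx
    obtain ⟨A, h1, h2⟩ := hfix x hx
    exact ⟨A, h1, h2⟩
  · rintro ⟨A, h1, rfl⟩
    exact hrealτ A h1
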